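/- For every real γ ≥ 2, the probability density f on (0, c) has mean 1/γ and variance (γ−1)/γ³: that is, ∫₀^c r·f(r) dr = 1/γ and ∫₀^c r²·f(r) dr − 1/γ² = (γ−1)/γ³. -/

import Mathlib

open MeasureTheory Real Filter
open Set intervalIntegral

lemma aux_int (c : ℝ) (hc0 : 0 < c) (hc1 : c ≤ 1) :
    IntervalIntegrable (fun r => Real.sqrt (r * (c - r)) / (1 - r)) volume 0 c := by
  have h1 : IntervalIntegrable (fun x : ℝ => x ^ (-(1/2) : ℝ)) volume 0 1 :=
    intervalIntegral.intervalIntegrable_rpow' (by norm_num)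
  have h2 := (h1.comp_sub_left 1).symm
  norm_num at h2
  have h3 : IntervalIntegrable (fun x : ℝ => Real.sqrt c * (1 - x) ^ (-(1/2) : ℝ)) volume 0 c := by
    apply IntervalIntegrable.const_mul
    apply h2.mono_set
    rw [Set.uIcc_of_le hc0.le, Set.uIcc_of_le (by norm_num : (0:ℝ) ≤ 1)]
    exact Set.Icc_subset_Icc le_rfl hc1
  apply h3.mono_fun
  · apply Measurable.aestronglyMeasurable
    exact ((Real.continuous_sqrt.comp (by continuity)).measurable).div (by fun_prop)
  · apply MeasureTheory.ae_restrict_of_forall_mem measurableSet_uIoc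
    intro r hr
    rw [Set.uIoc_of_le hc0.le] at hr
    obtain ⟨hr0, hrc⟩ := hr
    have hr1 : r ≤ 1 := hrc.trans hc1
    simp only [Real.norm_eq_abs]
    rcases eq_or_lt_of_le hr1 with h | h
    · rw [← h]
      simp
      positivity
    · have h1r : 0 < 1 - r := by linarith
      rw [abs_of_nonneg (by positivity), abs_of_nonneg (by positivity)]
      have hb : Real.sqrt (r * (c - r)) ≤ Real.sqrt c * Real.sqrt (1 - r) := by
        rw [← Real.sqrt_mul hc0.le]
        apply Real.sqrt_le_sqrt
        have : 0 ≤ c - r := by linarith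
        nlinarith
      have hrp : (1 - r) ^ (-(1/2) : ℝ) = Real.sqrt (1 - r) / (1 - r) := by
        rw [Real.sqrt_div_self', Real.rpow_neg h1r.le, ← Real.sqrt_eq_rpow, one_div]
      rw [hrp, div_le_iff₀ h1r, mul_assoc, div_mul_cancel₀ _ h1r.ne']
      exact hb

lemma hasDeriv_s (c r : ℝ) (h1 : 0 < r) (h2 : r < c) :
    HasDerivAt (fun x => Real.sqrt (x * (c - x)))
      ((c - 2*r) / (2 * Real.sqrt (r * (c - r)))) r := by
  have hpos : 0 < r * (c - r) := by nlinarith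
  have inner : HasDerivAt (fun x : ℝ => x * (c - x)) (c - 2*r) r := by
    have := (hasDerivAt_id r).mul ((hasDerivAt_const r c).sub (hasDerivAt_id r))
    simp only [id] at this
    refine this.congr_deriv (Eq.symm ?_)
    simp only [Pi.sub_apply, id]
    ring
  have := (Real.hasDerivAt_sqrt hpos.ne').comp r inner
  refine this.congr_deriv (Eq.symm ?_)
  ring

lemma hasDeriv_u (c r : ℝ) (hc0 : 0 < c) (h1 : 0 < r) (h2 : r < c) :
    HasDerivAt (fun x => Real.arcsin ((2*x - c) / c))
      (1 / Real.sqrt (r * (c - r))) r := by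
  have hpos : 0 < r * (c - r) := by nlinarith
  have inner : HasDerivAt (fun x : ℝ => (2*x - c) / c) (2 / c) r := by
    simpa using (((hasDerivAt_id r).const_mul 2).sub_const c).div_const c
  have hne1 : (2*r - c)/c ≠ -1 := by
    rw [ne_eq, div_eq_iff hc0.ne']
    intro h; nlinarith
  have hne2 : (2*r - c)/c ≠ 1 := by
    rw [ne_eq, div_eq_iff hc0.ne']
    intro h; nlinarith
  have := (Real.hasDerivAt_arcsin hne1 hne2).comp r inner
  refine this.congr_deriv (Eq.symm ?_)
  have h1x : 1 - ((2*r - c)/c)^2 = (2/c)^2 * (r * (c - r)) := by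
    field_simp; ring
  rw [h1x, Real.sqrt_mul (sq_nonneg _), Real.sqrt_sq (by positivity : (0:ℝ) ≤ 2/c)]
  have hs : Real.sqrt (r * (c-r)) ≠ 0 := by positivity
  field_simp [hc0.ne']

lemma hasDeriv_v (c r : ℝ) (hc0 : 0 < c) (hc1 : c < 1) (h1 : 0 < r) (h2 : r < c) :
    HasDerivAt (fun x => Real.arcsin (((2 - c)*x - c) / (c * (1 - x))))
      (Real.sqrt (1 - c) / ((1 - r) * Real.sqrt (r * (c - r)))) r := by
  have hr1 : r < 1 := h2.trans hc1
  have h1r : (0:ℝ) < 1 - r := by linarith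
  have hden : c * (1 - r) ≠ 0 := by positivity
  have hpos : 0 < r * (c - r) := by nlinarith
  have hv : HasDerivAt (fun x : ℝ => ((2 - c)*x - c) / (c * (1 - x)))
      ((2 - 2*c) / (c * (1 - r)^2)) r := by
    have hnum : HasDerivAt (fun x : ℝ => (2 - c)*x - c) (2 - c) r := by
      simpa using ((hasDerivAt_id r).const_mul (2 - c)).sub_const c
    have hde : HasDerivAt (fun x : ℝ => c * (1 - x)) (-c) r := by
      simpa using ((hasDerivAt_const r (1:ℝ)).sub (hasDerivAt_id r)).const_mul c
    have := hnum.div hde hden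
    refine this.congr_deriv (Eq.symm ?_)
    field_simp
    ring
  have hne1 : ((2 - c)*r - c) / (c * (1 - r)) ≠ -1 := by
    rw [ne_eq, div_eq_iff hden]
    intro h; nlinarith
  have hne2 : ((2 - c)*r - c) / (c * (1 - r)) ≠ 1 := by
    rw [ne_eq, div_eq_iff hden]
    intro h; nlinarith
  have := (Real.hasDerivAt_arcsin hne1 hne2).comp r hv
  refine this.congr_deriv (Eq.symm ?_)
  have h1v : 1 - (((2 - c)*r - c) / (c * (1 - r)))^2
      = (4*(1 - c)) * (r * (c - r)) / (c * (1 - r))^2 := by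
    field_simp
    ring
  have hsq : Real.sqrt ((4*(1 - c)) * (r * (c - r)) / (c * (1 - r))^2)
      = 2 * Real.sqrt (1 - c) * Real.sqrt (r * (c - r)) / (c * (1 - r)) := by
    rw [show (4*(1 - c)) * (r * (c - r)) / (c * (1 - r))^2
        = (2 * Real.sqrt (1 - c) * Real.sqrt (r * (c - r)) / (c * (1 - r)))^2 by
      rw [div_pow]
      congr 1
      rw [mul_pow, mul_pow, Real.sq_sqrt (by linarith : (0:ℝ) ≤ 1 - c),
        Real.sq_sqrt hpos.le]
      ring]
    exact Real.sqrt_sq (by positivity)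
  rw [h1v, hsq]
  have h1c0 : Real.sqrt (1 - c) ≠ 0 := (Real.sqrt_pos.2 (by linarith)).ne'
  have hs0 : Real.sqrt (r * (c - r)) ≠ 0 := (Real.sqrt_pos.2 hpos).ne'
  have h1csq : Real.sqrt (1 - c) * Real.sqrt (1 - c) = 1 - c := Real.mul_self_sqrt (by linarith)
  rw [one_div_div, div_mul_div_comm]
  have hd1 : (1 - r) * Real.sqrt (r * (c - r)) ≠ 0 := mul_ne_zero h1r.ne' hs0
  have hd2 : 2 * Real.sqrt (1 - c) * Real.sqrt (r * (c - r)) * (c * (1 - r) ^ 2) ≠ 0 :=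
    mul_ne_zero (mul_ne_zero (mul_ne_zero two_ne_zero h1c0) hs0)
      (mul_ne_zero hc0.ne' (pow_ne_zero 2 h1r.ne'))
  rw [div_eq_div_iff hd1 hd2]
  linear_combination (2 * Real.sqrt (r*(c-r)) * c * (1-r)^2) * h1csq

lemma key1 (c : ℝ) (hc0 : 0 < c) (hc1 : c ≤ 1) :
    ∫ r in (0:ℝ)..c, Real.sqrt (r * (c - r)) / (1 - r)
      = π * (2 - c - 2 * Real.sqrt (1 - c)) / 2 := by
  rcases eq_or_lt_of_le hc1 with hceq | hclt
  · -- c = 1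
    subst hceq
    set F : ℝ → ℝ := fun r => -Real.sqrt (r * (1 - r)) + (1/2) * Real.arcsin (2*r - 1) with hF
    have hcont : ContinuousOn F (Icc 0 1) := by
      apply ContinuousOn.add
      · exact (Real.continuous_sqrt.comp (by continuity)).neg.continuousOn
      · exact (continuous_const.mul (Real.continuous_arcsin.comp (by continuity))).continuousOn
    have hderiv : ∀ r ∈ Ioo (0:ℝ) 1, HasDerivWithinAt F
        (Real.sqrt (r * (1 - r)) / (1 - r)) (Ioi r) r := by
      intro r hr
      obtain ⟨hr0, hr1⟩ := hr
      have hpos : 0 < r * (1 - r) := by nlinarith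
      have hs0 : Real.sqrt (r * (1 - r)) ≠ 0 := (Real.sqrt_pos.2 hpos).ne'
      have hd1 := hasDeriv_s 1 r hr0 hr1
      have hd2 := hasDeriv_u 1 r one_pos hr0 hr1
      have hd2' : HasDerivAt (fun x => Real.arcsin (2*x - 1))
          (1 / Real.sqrt (r * (1 - r))) r := by
        convert hd2 using 2 with x
        · rw [div_one]
      have hd : HasDerivAt F
          (-(((1:ℝ) - 2*r) / (2 * Real.sqrt (r * (1 - r))))
            + (1/2) * (1 / Real.sqrt (r * (1 - r)))) r := hd1.neg.add (hd2'.const_mul (1/2))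
      apply HasDerivAt.hasDerivWithinAt
      refine hd.congr_deriv (Eq.symm ?_)
      have hsq : Real.sqrt (r * (1 - r)) * Real.sqrt (r * (1 - r)) = r * (1 - r) :=
        Real.mul_self_sqrt hpos.le
      set S := Real.sqrt (r * (1 - r)) with hS
      have key : S / (1 - r) = r / S := by
        rw [div_eq_div_iff (by linarith : (1:ℝ) - r ≠ 0) hs0]
        linarith [hsq]
      rw [key]
      field_simp
      ring
    have := intervalIntegral.integral_eq_sub_of_hasDeriv_right_of_le (by norm_num : (0:ℝ) ≤ 1)
      hcont hderiv (aux_int 1 one_pos le_rfl)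
    rw [this, hF]
    norm_num [Real.arcsin_one, Real.arcsin_neg_one]
    ring
  · -- c < 1
    set F : ℝ → ℝ := fun r => -Real.sqrt (r * (c - r)) + (1 - c/2) * Real.arcsin ((2*r - c)/c)
      - Real.sqrt (1 - c) * Real.arcsin (((2 - c)*r - c)/(c*(1 - r))) with hF
    have hcont : ContinuousOn F (Icc 0 c) := by
      apply ContinuousOn.sub
      · apply ContinuousOn.add
        · exact (Real.continuous_sqrt.comp (by continuity)).neg.continuousOn
        · exact (continuous_const.mul (Real.continuous_arcsin.comp (by continuity))).continuousOn
      · apply ContinuousOn.mul continuousOn_const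
        apply Real.continuous_arcsin.comp_continuousOn
        apply ContinuousOn.div ((by continuity : Continuous fun r : ℝ => (2 - c)*r - c).continuousOn)
          ((by continuity : Continuous fun r : ℝ => c*(1 - r)).continuousOn)
        intro x hx
        have : x ≤ c := hx.2
        have : 0 < 1 - x := by linarith
        positivity
    have hderiv : ∀ r ∈ Ioo (0:ℝ) c, HasDerivWithinAt F
        (Real.sqrt (r * (c - r)) / (1 - r)) (Ioi r) r := by
      intro r hr
      obtain ⟨hr0, hrc⟩ := hr
      have hr1 : r < 1 := hrc.trans hclt
      have h1r : (0:ℝ) < 1 - r := by linarith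
      have hpos : 0 < r * (c - r) := by nlinarith
      have hs0 : Real.sqrt (r * (c - r)) ≠ 0 := (Real.sqrt_pos.2 hpos).ne'
      have hd1 := hasDeriv_s c r hr0 hrc
      have hd2 := hasDeriv_u c r hc0 hr0 hrc
      have hd3 := hasDeriv_v c r hc0 hclt hr0 hrc
      have hd : HasDerivAt F
          (-((c - 2*r) / (2 * Real.sqrt (r * (c - r))))
            + (1 - c/2) * (1 / Real.sqrt (r * (c - r)))
            - Real.sqrt (1 - c)
              * (Real.sqrt (1 - c) / ((1 - r) * Real.sqrt (r * (c - r))))) r :=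
        (hd1.neg.add (hd2.const_mul (1 - c/2))).sub (hd3.const_mul (Real.sqrt (1 - c)))
      apply HasDerivAt.hasDerivWithinAt
      refine hd.congr_deriv (Eq.symm ?_)
      have hsq : Real.sqrt (r * (c - r)) * Real.sqrt (r * (c - r)) = r * (c - r) :=
        Real.mul_self_sqrt hpos.le
      have h1csq : Real.sqrt (1 - c) * Real.sqrt (1 - c) = 1 - c :=
        Real.mul_self_sqrt (by linarith)
      set S := Real.sqrt (r * (c - r)) with hS
      have hthird : Real.sqrt (1 - c) * (Real.sqrt (1 - c) / ((1 - r) * S))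
          = (1 - c) / ((1 - r) * S) := by
        rw [mul_div_assoc', h1csq]
      rw [hthird]
      have key : S / (1 - r) = r * (c - r) / ((1 - r) * S) := by
        rw [div_eq_div_iff h1r.ne' (mul_ne_zero h1r.ne' hs0)]
        linear_combination (1 - r) * hsq
      rw [key]
      field_simp
      ring
    have := intervalIntegral.integral_eq_sub_of_hasDeriv_right_of_le hc0.le
      hcont hderiv (aux_int c hc0 hc1)
    rw [this]
    have e0 : c * (c - c) = 0 := by ring
    have e1 : (2*c - c)/c = 1 := by rw [div_eq_one_iff_eq hc0.ne']; ring
    have e2 : ((2 - c)*c - c)/(c*(1 - c)) = 1 := by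
      rw [div_eq_one_iff_eq (mul_ne_zero hc0.ne' (by linarith : (1:ℝ) - c ≠ 0))]
      ring
    have e3 : ((2:ℝ)*0 - c)/c = -1 := by
      rw [div_eq_iff hc0.ne']; ring
    have e4 : ((2 - c)*0 - c)/(c*(1 - 0)) = -1 := by
      rw [div_eq_iff (by simpa using hc0.ne' : c*(1 - (0:ℝ)) ≠ 0)]; ring
    have e5 : (0:ℝ) * (c - 0) = 0 := by ring
    have Fc : F c = (1 - c/2) * (π/2) - Real.sqrt (1 - c) * (π/2) := by
      show -Real.sqrt (c * (c - c)) + (1 - c/2) * Real.arcsin ((2*c - c)/c)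
        - Real.sqrt (1 - c) * Real.arcsin (((2 - c)*c - c)/(c*(1 - c))) = _
      rw [e0, e1, e2, Real.sqrt_zero, Real.arcsin_one]
      ring
    have F0 : F 0 = -((1 - c/2) * (π/2)) + Real.sqrt (1 - c) * (π/2) := by
      show -Real.sqrt (0 * (c - 0)) + (1 - c/2) * Real.arcsin ((2*0 - c)/c)
        - Real.sqrt (1 - c) * Real.arcsin (((2 - c)*0 - c)/(c*(1 - 0))) = _
      rw [e5, e3, e4, Real.sqrt_zero, Real.arcsin_neg_one]
      ring
    rw [Fc, F0]
    ring

lemma key2 (c : ℝ) (hc0 : 0 < c) :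
    ∫ r in (0:ℝ)..c, Real.sqrt (r * (c - r)) = π * c^2 / 8 := by
  set F : ℝ → ℝ := fun r => (r - c/2) * Real.sqrt (r * (c - r)) / 2
    + c^2/8 * Real.arcsin ((2*r - c)/c) with hF
  have hcont : ContinuousOn F (Icc 0 c) := by
    apply ContinuousOn.add
    · exact (((continuous_id.sub continuous_const).mul
        (Real.continuous_sqrt.comp (by continuity))).div_const 2).continuousOn
    · exact (continuous_const.mul (Real.continuous_arcsin.comp (by continuity))).continuousOn
  have hderiv : ∀ r ∈ Ioo (0:ℝ) c, HasDerivWithinAt F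
      (Real.sqrt (r * (c - r))) (Ioi r) r := by
    intro r hr
    obtain ⟨hr0, hrc⟩ := hr
    have hpos : 0 < r * (c - r) := by nlinarith
    have hs0 : Real.sqrt (r * (c - r)) ≠ 0 := (Real.sqrt_pos.2 hpos).ne'
    have hd1 := hasDeriv_s c r hr0 hrc
    have hd2 := hasDeriv_u c r hc0 hr0 hrc
    have hda : HasDerivAt (fun x : ℝ => (x - c/2) * Real.sqrt (x * (c - x)))
        (1 * Real.sqrt (r * (c - r))
          + (r - c/2) * ((c - 2*r) / (2 * Real.sqrt (r * (c - r))))) r := by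
      exact ((hasDerivAt_id r).sub_const (c/2)).mul hd1
    have hd : HasDerivAt F
        ((1 * Real.sqrt (r * (c - r))
          + (r - c/2) * ((c - 2*r) / (2 * Real.sqrt (r * (c - r))))) / 2
          + c^2/8 * (1 / Real.sqrt (r * (c - r)))) r :=
      (hda.div_const 2).add (hd2.const_mul (c^2/8))
    apply HasDerivAt.hasDerivWithinAt
    refine hd.congr_deriv (Eq.symm ?_)
    have hsq : Real.sqrt (r * (c - r)) * Real.sqrt (r * (c - r)) = r * (c - r) :=
      Real.mul_self_sqrt hpos.le
    set S := Real.sqrt (r * (c - r)) with hS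
    field_simp
    linear_combination 32 * hsq
  have := intervalIntegral.integral_eq_sub_of_hasDeriv_right_of_le hc0.le
    hcont hderiv ((Real.continuous_sqrt.comp (by continuity)).intervalIntegrable 0 c)
  rw [this]
  have e0 : c * (c - c) = 0 := by ring
  have e1 : (2*c - c)/c = 1 := by rw [div_eq_one_iff_eq hc0.ne']; ring
  have e3 : ((2:ℝ)*0 - c)/c = -1 := by rw [div_eq_iff hc0.ne']; ring
  have e5 : (0:ℝ) * (c - 0) = 0 := by ring
  have Fc : F c = c^2/8 * (π/2) := by
    show (c - c/2) * Real.sqrt (c * (c - c)) / 2 + c^2/8 * Real.arcsin ((2*c - c)/c) = _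
    rw [e0, e1, Real.sqrt_zero, Real.arcsin_one]
    ring
  have F0 : F 0 = -(c^2/8 * (π/2)) := by
    show ((0:ℝ) - c/2) * Real.sqrt (0 * (c - 0)) / 2 + c^2/8 * Real.arcsin ((2*0 - c)/c) = _
    rw [e5, e3, Real.sqrt_zero, Real.arcsin_neg_one]
    ring
  rw [Fc, F0]
  ring

lemma key3 (c : ℝ) (hc0 : 0 < c) (hc1 : c ≤ 1) :
    ∫ r in (0:ℝ)..c, r * Real.sqrt (r * (c - r)) / (1 - r)
      = π * (2 - c - 2 * Real.sqrt (1 - c)) / 2 - π * c^2 / 8 := by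
  have hcong : ∀ r ∈ Set.uIoc (0:ℝ) c,
      r * Real.sqrt (r * (c - r)) / (1 - r)
        = Real.sqrt (r * (c - r)) / (1 - r) - Real.sqrt (r * (c - r)) := by
    intro r hr
    rw [Set.uIoc_of_le hc0.le] at hr
    obtain ⟨hr0, hrc⟩ := hr
    rcases eq_or_ne (1 - r) 0 with h | h
    · have hr1 : r = 1 := by linarith
      have hc1' : c = 1 := le_antisymm hc1 (by linarith [hrc])
      subst hr1
      rw [hc1']
      norm_num
    · field_simp
      ring
  rw [intervalIntegral.integral_congr_ae (MeasureTheory.ae_of_all _ hcong),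
    intervalIntegral.integral_sub (aux_int c hc0 hc1)
      ((by continuity : Continuous fun r : ℝ => Real.sqrt (r * (c - r))).intervalIntegrable 0 c),
    key1 c hc0 hc1, key2 c hc0]

theorem statement12 (γ : ℝ) (hγ : 2 ≤ γ) :
    (∫ r in (0 : ℝ)..(4 * (γ - 1) / γ ^ 2),
      r * ((1 / (2 * π * (1 - r))) * Real.sqrt (4 * (γ - 1) * (1 - r) / r - (γ - 2) ^ 2))
        = 1 / γ) ∧
    (∫ r in (0 : ℝ)..(4 * (γ - 1) / γ ^ 2),
      r ^ 2 * ((1 / (2 * π * (1 - r))) * Real.sqrt (4 * (γ - 1) * (1 - r) / r - (γ - 2) ^ 2)))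
        - 1 / γ ^ 2 = (γ - 1) / γ ^ 3 := by
  have hγ0 : (0:ℝ) < γ := by linarith
  have hγ1 : (0:ℝ) < γ - 1 := by linarith
  have hγ2 : (0:ℝ) < γ ^ 2 := by positivity
  have hπ := Real.pi_ne_zero
  set c : ℝ := 4 * (γ - 1) / γ ^ 2 with hc
  have hc0 : 0 < c := by rw [hc]; positivity
  have hc1 : c ≤ 1 := by
    rw [hc, div_le_one hγ2]; nlinarith [sq_nonneg (γ - 2)]
  have hsq1c : Real.sqrt (1 - c) = (γ - 2)/γ := by
    rw [show 1 - c = ((γ - 2)/γ)^2 by rw [hc]; field_simp; ring]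
    exact Real.sqrt_sq (div_nonneg (by linarith) hγ0.le)
  have hin : ∀ r : ℝ, 0 < r →
      4 * (γ - 1) * (1 - r) / r - (γ - 2) ^ 2 = (γ/r)^2 * (r * (c - r)) := by
    intro r hr0
    rw [hc]; field_simp; ring
  have hA : ∀ r ∈ Set.uIoc (0:ℝ) c,
      r * ((1 / (2 * π * (1 - r))) * Real.sqrt (4 * (γ - 1) * (1 - r) / r - (γ - 2) ^ 2))
        = γ/(2*π) * (Real.sqrt (r * (c - r)) / (1 - r)) := by
    intro r hr
    rw [Set.uIoc_of_le hc0.le] at hr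
    obtain ⟨hr0, hrc⟩ := hr
    rw [hin r hr0, Real.sqrt_mul (sq_nonneg _), Real.sqrt_sq (by positivity : (0:ℝ) ≤ γ/r)]
    rcases eq_or_ne (1 - r) 0 with h | h
    · rw [h]
      simp
    · field_simp
  have hB : ∀ r ∈ Set.uIoc (0:ℝ) c,
      r ^ 2 * ((1 / (2 * π * (1 - r))) * Real.sqrt (4 * (γ - 1) * (1 - r) / r - (γ - 2) ^ 2))
        = γ/(2*π) * (r * Real.sqrt (r * (c - r)) / (1 - r)) := by
    intro r hr
    rw [Set.uIoc_of_le hc0.le] at hr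
    obtain ⟨hr0, hrc⟩ := hr
    rw [hin r hr0, Real.sqrt_mul (sq_nonneg _), Real.sqrt_sq (by positivity : (0:ℝ) ≤ γ/r)]
    rcases eq_or_ne (1 - r) 0 with h | h
    · rw [h]
      simp
    · field_simp
  constructor
  · rw [intervalIntegral.integral_congr_ae (MeasureTheory.ae_of_all _ hA),
      intervalIntegral.integral_const_mul, key1 c hc0 hc1, hsq1c, hc]
    field_simp
    ring
  · rw [intervalIntegral.integral_congr_ae (MeasureTheory.ae_of_all _ hB),
      intervalIntegral.integral_const_mul, key3 c hc0 hc1, hsq1c, hc]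
    field_simp
    ring
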